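/- For complex numbers r, s ∈ ℂ, one has |P(r)| = |P(s)| for every polynomial P ∈ ℤ[X] (where |·| is the complex absolute value and P(r) is the evaluation of the integer polynomial P at r) if and only if s = r or s equals the complex conjugate of r. Consequently, the canonical map from ℂ to 𝔸¹_ℤ sending r to the seminorm P ↦ |P(r)| identifies two complex numbers exactly when they are equal or complex conjugate, so the image of ℂ in 𝔸¹_ℤ may be identified with the closed upper half plane (the 'folding up' of ℂ along the real axis). -/

import Mathlib

/-- For `r, s ∈ ℂ`, one has `|P(r)| = |P(s)|` for every `P ∈ ℤ[X]` if and only if `s = r`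
or `s` is the complex conjugate of `r`. -/
theorem abs_aeval_eq_iff_eq_or_conj (r s : ℂ) :
    (∀ P : Polynomial ℤ,
        ‖Polynomial.aeval r P‖ = ‖Polynomial.aeval s P‖) ↔
      (s = r ∨ s = (starRingEnd ℂ) r) := by
  constructor
  · intro h
    have h1 := h Polynomial.X
    have h2 := h (Polynomial.X - 1)
    simp only [Polynomial.aeval_X, map_sub, map_one, Polynomial.aeval_one] at h1 h2
    have n1 : Complex.normSq r = Complex.normSq s := by
      have := congrArg (· ^ 2) h1
      simpa [Complex.sq_norm] using this
    have n2 : Complex.normSq (r - 1) = Complex.normSq (s - 1) := by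
      have := congrArg (· ^ 2) h2
      simpa [Complex.sq_norm] using this
    have hre : r.re = s.re := by
      simp only [Complex.normSq_apply, Complex.sub_re, Complex.sub_im, Complex.one_re,
        Complex.one_im] at n1 n2
      nlinarith
    have him : r.im = s.im ∨ r.im = -s.im := by
      simp only [Complex.normSq_apply] at n1
      have key : r.im * r.im = s.im * s.im := by rw [hre] at n1; linarith
      exact mul_self_eq_mul_self_iff.mp key
    rcases him with h' | h'
    · left; exact Complex.ext hre.symm h'.symm
    · right
      refine Complex.ext ?_ ?_
      · simpa [Complex.conj_re] using hre.symm
      · simp [Complex.conj_im]; linarith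
  · rintro (rfl | rfl)
    · intro P; rfl
    · intro P
      have : (Polynomial.aeval ((starRingEnd ℂ) r)) P
          = (starRingEnd ℂ) ((Polynomial.aeval r) P) := by
        simpa using Polynomial.aeval_algHom_apply
          ((starRingEnd ℂ).toIntAlgHom) r P
      rw [this, Complex.norm_conj]
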